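/- Let d ≥ 1 and let x, y ∈ ℝ^d with summatory parameters x = Σx_i and y = Σy_i. Define h : ℝ → ℝ by h(u) := (1 − e^{−u})/u for u ≠ 0 and h(0) := 1, and set z := (1/h(x+y))·( h(x)·e^{−y}·x + h(y)·y ) ∈ ℝ^d. Then exp(Q_x)·exp(Q_y) = exp(Q_z); that is, the product of the two matrix exponentials has the explicit equal-input logarithm Q_z = (1/h(x+y))·( h(x)·e^{−y}·Q_x + h(y)·Q_y ). -/

import Mathlib

open Matrix

/-- `eqRows d x` is the `d × d` real matrix all of whose rows equal the row vector `x`. -/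
def eqRows (d : ℕ) (x : Fin d → ℝ) : Matrix (Fin d) (Fin d) ℝ :=
  Matrix.of fun _ j => x j

/-- The equal-input generator `Q_x := −x·I + C_x`, where `x = ∑ᵢ xᵢ`. -/
noncomputable def Qgen (d : ℕ) (x : Fin d → ℝ) : Matrix (Fin d) (Fin d) ℝ :=
  (-(∑ i, x i)) • (1 : Matrix (Fin d) (Fin d) ℝ) + eqRows d x

/-- `h(u) = (1 − e^{−u})/u` for `u ≠ 0`, with `h(0) = 1`. -/
noncomputable def hfun (u : ℝ) : ℝ :=
  if u = 0 then 1 else (1 - Real.exp (-u)) / u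

lemma hfun_pos (u : ℝ) : 0 < hfun u := by
  unfold hfun
  split_ifs with h
  · norm_num
  · rcases lt_or_gt_of_ne h with hu | hu
    · have h1 : 1 < Real.exp (-u) := by
        rw [← Real.exp_zero]; exact Real.exp_lt_exp.mpr (by linarith)
      exact div_pos_of_neg_of_neg (by linarith) hu
    · have h1 : Real.exp (-u) < 1 := by
        rw [← Real.exp_zero]; exact Real.exp_lt_exp.mpr (by linarith)
      exact div_pos (by linarith) hu

lemma mul_hfun (u : ℝ) : u * hfun u = 1 - Real.exp (-u) := by
  unfold hfun
  split_ifs with h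
  · simp [h]
  · field_simp

lemma aux_summable (t : ℝ) : Summable (fun n : ℕ => t ^ n / ((n + 1).factorial : ℝ)) := by
  apply Summable.of_norm
  apply Summable.of_nonneg_of_le (fun n => norm_nonneg _) (fun n => ?_)
    (Real.summable_pow_div_factorial |t|)
  rw [Real.norm_eq_abs, abs_div, abs_pow]
  rw [abs_of_nonneg (by positivity : (0:ℝ) ≤ ((n+1).factorial : ℝ))]
  gcongr
  all_goals first
    | exact abs_nonneg t
    | exact Nat.le_succ n
    | exact_mod_cast Nat.factorial_le (Nat.le_succ n)

lemma aux_tsum (t : ℝ) : ∑' n : ℕ, t ^ n / ((n + 1).factorial : ℝ) =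
    if t = 0 then 1 else (Real.exp t - 1) / t := by
  split_ifs with ht
  · subst ht
    rw [tsum_eq_single 0 (fun n hn => by simp [zero_pow hn])]
    norm_num
  · have hexp : Real.exp t = ∑' n : ℕ, t ^ n / (n.factorial : ℝ) := by
      rw [Real.exp_eq_exp_ℝ, NormedSpace.exp_eq_tsum_div]
    have h2 : t * ∑' n : ℕ, t ^ n / ((n+1).factorial : ℝ) = Real.exp t - 1 := by
      rw [← tsum_mul_left]
      have : ∀ n : ℕ, t * (t ^ n / ((n+1).factorial : ℝ)) = t ^ (n+1) / ((n+1).factorial : ℝ) := by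
        intro n; rw [pow_succ]; ring
      simp_rw [this]
      rw [hexp, Summable.tsum_eq_zero_add (Real.summable_pow_div_factorial t)]
      norm_num
    field_simp [← h2]
    linarith [h2]

lemma hfun_tsum (a : ℝ) : ∑' n : ℕ, (-a) ^ n / ((n + 1).factorial : ℝ) = hfun a := by
  rw [aux_tsum]
  unfold hfun
  by_cases h : a = 0
  · simp [h]
  · rw [if_neg (by simpa using h), if_neg h]
    rw [div_eq_div_iff (by simpa using h) h]
    ring

/-- If `A² = (−a)·A`, then `exp A = 1 + h(a)·A`. -/
lemma exp_of_sq {d : ℕ} (A : Matrix (Fin d) (Fin d) ℝ) (a : ℝ)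
    (hA : A * A = (-a) • A) :
    NormedSpace.exp A = 1 + hfun a • A := by
  letI : SeminormedRing (Matrix (Fin d) (Fin d) ℝ) := Matrix.linftyOpSemiNormedRing
  letI : NormedRing (Matrix (Fin d) (Fin d) ℝ) := Matrix.linftyOpNormedRing
  letI : NormedAlgebra ℝ (Matrix (Fin d) (Fin d) ℝ) := Matrix.linftyOpNormedAlgebra
  have hpow : ∀ n : ℕ, A ^ (n + 1) = (-a) ^ n • A := by
    intro n
    induction n with
    | zero => simp
    | succ n ih =>
      rw [pow_succ, ih, Matrix.smul_mul, hA, smul_smul, pow_succ]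
  rw [NormedSpace.exp_eq_tsum (𝕂 := ℝ)]
  beta_reduce
  rw [Summable.tsum_eq_zero_add (f := fun n : ℕ => ((n.factorial : ℝ))⁻¹ • A ^ n)
    (by exact NormedSpace.expSeries_summable' (𝕂 := ℝ) A)]
  simp only [hpow, pow_zero, Nat.factorial_zero, Nat.cast_one, inv_one, one_smul]
  congr 1
  have : ∀ n : ℕ, (((n+1).factorial : ℝ))⁻¹ • ((-a) ^ n • A)
      = ((-a) ^ n / ((n+1).factorial : ℝ)) • A := by
    intro n; rw [smul_smul]; ring_nf
  simp_rw [this]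
  rw [Summable.tsum_smul_const (aux_summable (-a)), hfun_tsum]

lemma Qgen_mul {d : ℕ} (x y : Fin d → ℝ) :
    Qgen d x * Qgen d y = (-(∑ i, y i)) • Qgen d x := by
  ext i j
  simp only [Qgen, eqRows, Matrix.mul_apply, Matrix.add_apply, Matrix.smul_apply,
    Matrix.one_apply, Matrix.of_apply, smul_eq_mul, mul_ite, mul_zero, mul_one,
    ite_mul, zero_mul, add_mul, mul_add, Finset.sum_add_distrib, Finset.sum_ite_eq,
    Finset.sum_ite_eq', Finset.mem_univ, if_true]
  split_ifs <;> first
    | (rw [← Finset.sum_mul]; ring)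
    | ring

lemma Qgen_smul {d : ℕ} (c : ℝ) (x : Fin d → ℝ) : Qgen d (c • x) = c • Qgen d x := by
  ext i j
  simp [Qgen, eqRows, Matrix.one_apply, ← Finset.mul_sum, mul_add]

lemma Qgen_add {d : ℕ} (x y : Fin d → ℝ) : Qgen d (x + y) = Qgen d x + Qgen d y := by
  ext i j
  simp [Qgen, eqRows, Matrix.one_apply, Finset.sum_add_distrib]
  split_ifs <;> first
    | (rw [← Finset.sum_mul]; ring)
    | ring

/-- with `z := (1/h(x+y))·(h(x)·e^{−y}·x + h(y)·y)`, one has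
`exp(Q_x)·exp(Q_y) = exp(Q_z)`, and `Q_z` is the corresponding explicit linear combination
of `Q_x` and `Q_y` of equal-input type. -/
theorem stmt6 (d : ℕ) (hd : 1 ≤ d) (x y : Fin d → ℝ) :
    NormedSpace.exp (Qgen d x) * NormedSpace.exp (Qgen d y) =
      NormedSpace.exp (Qgen d
        ((hfun ((∑ i, x i) + ∑ i, y i))⁻¹ •
          ((hfun (∑ i, x i) * Real.exp (-(∑ i, y i))) • x + hfun (∑ i, y i) • y))) ∧
    Qgen d ((hfun ((∑ i, x i) + ∑ i, y i))⁻¹ •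
        ((hfun (∑ i, x i) * Real.exp (-(∑ i, y i))) • x + hfun (∑ i, y i) • y)) =
      (hfun ((∑ i, x i) + ∑ i, y i))⁻¹ •
        ((hfun (∑ i, x i) * Real.exp (-(∑ i, y i))) • Qgen d x +
          hfun (∑ i, y i) • Qgen d y) := by
  set sx := ∑ i, x i with hsx
  set sy := ∑ i, y i with hsy
  set a := hfun sx * Real.exp (-sy) with ha
  set b := hfun sy with hb
  set c := hfun (sx + sy) with hc
  have hcne : c ≠ 0 := (hfun_pos _).ne'
  set z : Fin d → ℝ := c⁻¹ • (a • x + b • y) with hz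
  -- part 2
  have part2 : Qgen d z = c⁻¹ • (a • Qgen d x + b • Qgen d y) := by
    rw [hz, Qgen_smul, Qgen_add, Qgen_smul, Qgen_smul]
  -- summatory of z
  have hzsum : (∑ i, z i) = sx + sy := by
    have h1 : (∑ i, z i) = c⁻¹ * (a * sx + b * sy) := by
      simp only [hz, Pi.smul_apply, Pi.add_apply, smul_eq_mul]
      rw [← Finset.mul_sum, Finset.sum_add_distrib, ← Finset.mul_sum, ← Finset.mul_sum]
    have h2 : a * sx + b * sy = c * (sx + sy) := by
      have e1 : sx * hfun sx = 1 - Real.exp (-sx) := mul_hfun sx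
      have e2 : sy * hfun sy = 1 - Real.exp (-sy) := mul_hfun sy
      have e3 : (sx + sy) * hfun (sx + sy) = 1 - Real.exp (-(sx + sy)) := mul_hfun (sx + sy)
      have e4 : Real.exp (-(sx + sy)) = Real.exp (-sx) * Real.exp (-sy) := by
        rw [← Real.exp_add]; ring_nf
      rw [ha, hb, hc]
      linear_combination Real.exp (-sy) * e1 + e2 - e3 + e4
    rw [h1, h2, ← mul_assoc, inv_mul_cancel₀ hcne, one_mul]
  -- exponentials
  have hex : NormedSpace.exp (Qgen d x) = 1 + hfun sx • Qgen d x :=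
    exp_of_sq _ _ (Qgen_mul x x)
  have hey : NormedSpace.exp (Qgen d y) = 1 + hfun sy • Qgen d y :=
    exp_of_sq _ _ (Qgen_mul y y)
  have hez : NormedSpace.exp (Qgen d z) = 1 + c • Qgen d z := by
    refine exp_of_sq _ _ ?_
    rw [Qgen_mul, hzsum]
  constructor
  · show _ = NormedSpace.exp (Qgen d z)
    rw [hex, hey, hez, part2]
    rw [smul_smul, mul_inv_cancel₀ hcne, one_smul]
    have hxy : Qgen d x * Qgen d y = (-sy) • Qgen d x := Qgen_mul x y
    have hcoef : hfun sx * hfun sy * (-sy) = a - hfun sx := by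
      have e2 := mul_hfun sy
      rw [ha]
      linear_combination (-(hfun sx)) * e2
    have expand : (1 + hfun sx • Qgen d x) * (1 + hfun sy • Qgen d y)
        = 1 + hfun sx • Qgen d x + hfun sy • Qgen d y
          + (hfun sx * hfun sy * (-sy)) • Qgen d x := by
      simp only [mul_add, add_mul, one_mul, mul_one, smul_mul_smul_comm, hxy, smul_smul]
      abel
    rw [expand, hcoef, hb]
    module
  · exact part2
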